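/- arXiv:1511.02688 — 3 statements merged into one kernel-verified Lean document; each statement's English description precedes it below -/
import Mathlib

section
/- Let F and H be real Hilbert spaces, let E : F → ℝⁿ and D : F → H be continuous linear maps, and suppose there exists C₀ > 0 such that ‖D f‖_H ≥ C₀ ‖f‖_F for all f ∈ F. Let X be a real n×q matrix of rank q, let W be an n×n diagonal matrix with strictly positive diagonal entries, let λ > 0 and z ∈ ℝⁿ. Then the functional J(β, f) = Σᵢ Wᵢᵢ (zᵢ − (Xβ)ᵢ − (E f)ᵢ)² + λ ‖D f‖²_H admits a unique minimizer (β̃, f̃) ∈ ℝ^q × F, and the minimizing β̃ satisfies β̃ = (XᵀWX)⁻¹ Xᵀ W (z − E f̃). -/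
open Matrix

/-- Penalized weighted least-squares functional of the functional PIRLS step. -/
noncomputable def pirlsJ {n q : ℕ} {F H : Type*}
    [NormedAddCommGroup F] [InnerProductSpace ℝ F]
    [NormedAddCommGroup H] [InnerProductSpace ℝ H]
    (E : F →L[ℝ] (Fin n → ℝ)) (D : F →L[ℝ] H)
    (X : Matrix (Fin n) (Fin q) ℝ) (w : Fin n → ℝ) (lam : ℝ) (z : Fin n → ℝ)
    (p : (Fin q → ℝ) × F) : ℝ :=
  ∑ i, w i * (z i - (X *ᵥ p.1) i - E p.2 i) ^ 2 + lam * ‖D p.2‖ ^ 2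

lemma quad_aux (a b : ℝ) (h : ∀ t : ℝ, 0 ≤ a * t ^ 2 + b * t) : b = 0 := by
  have h1 := h 1
  have h2 := h (-1)
  have ha : 0 ≤ a := by nlinarith
  have hpos : 0 < a + 1 := by linarith
  have h3 := h (-(b / (a + 1)))
  have e : a * (-(b / (a + 1))) ^ 2 + b * (-(b / (a + 1)))
      = -(b ^ 2) * (1 / (a + 1) ^ 2) := by
    field_simp
    ring
  rw [e] at h3
  have hsq : (0:ℝ) < (a + 1) ^ 2 := by positivity
  have h4 : 0 ≤ -(b ^ 2) := by
    have h5 := mul_nonneg h3 hsq.le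
    have e2 : -(b ^ 2) * (1 / (a + 1) ^ 2) * (a + 1) ^ 2 = -(b ^ 2) := by
      field_simp
    rwa [e2] at h5
  have hb2 : b ^ 2 = 0 := le_antisymm (by linarith) (sq_nonneg b)
  exact pow_eq_zero_iff (by norm_num) |>.mp hb2

lemma rank_mulVec_injective {n q : ℕ} (X : Matrix (Fin n) (Fin q) ℝ) (hX : X.rank = q) :
    Function.Injective X.mulVec := by
  rw [Matrix.rank] at hX
  have h2 := LinearMap.finrank_range_add_finrank_ker X.mulVecLin
  have h3 : Module.finrank ℝ (Fin q → ℝ) = q := by simp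
  have hker : Module.finrank ℝ (LinearMap.ker X.mulVecLin) = 0 := by omega
  have hbot : LinearMap.ker X.mulVecLin = ⊥ := Submodule.finrank_eq_zero.mp hker
  exact LinearMap.ker_eq_bot.mp hbot

lemma xtwx_posdef {n q : ℕ} (X : Matrix (Fin n) (Fin q) ℝ)
    (hinj : Function.Injective X.mulVec) (w : Fin n → ℝ) (hw : ∀ i, 0 < w i) :
    (Xᵀ * diagonal w * X).PosDef := by
  rw [Matrix.posDef_iff_dotProduct_mulVec]
  constructor
  · show (Xᵀ * diagonal w * X)ᴴ = _
    have : (diagonal w)ᴴ = diagonal w := by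
      simp [Matrix.diagonal_conjTranspose]
    simp [Matrix.conjTranspose_mul, this, Matrix.mul_assoc]
  · intro x hx
    have hy : X *ᵥ x ≠ 0 := by
      intro h
      exact hx (hinj (by simpa using h))
    have expand : star x ⬝ᵥ ((Xᵀ * diagonal w * X) *ᵥ x)
        = ∑ i, w i * (X *ᵥ x) i ^ 2 := by
      have hstar : star x = x := by
        funext i; simp
      rw [hstar, ← Matrix.mulVec_mulVec, ← Matrix.mulVec_mulVec,
        Matrix.dotProduct_mulVec, Matrix.vecMul_transpose]
      simp only [dotProduct, Matrix.mulVec_diagonal]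
      exact Finset.sum_congr rfl fun i _ => by ring
    rw [expand]
    obtain ⟨j, hj⟩ : ∃ j, (X *ᵥ x) j ≠ 0 := by
      by_contra h
      push_neg at h
      exact hy (funext h)
    exact Finset.sum_pos' (fun i _ => mul_nonneg (hw i).le (sq_nonneg _))
      ⟨j, Finset.mem_univ j, mul_pos (hw j) (pow_two_pos_of_ne_zero hj)⟩

lemma le_of_sq_le_sq' {a b : ℝ} (hb : 0 ≤ b) (h : a ^ 2 ≤ b ^ 2) (ha : 0 ≤ a) : a ≤ b := by
  nlinarith

section main
variable {n q : ℕ} {F H : Type*}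
  [NormedAddCommGroup F] [InnerProductSpace ℝ F] [CompleteSpace F]
  [NormedAddCommGroup H] [InnerProductSpace ℝ H] [CompleteSpace H]

set_option maxHeartbeats 1000000 in
lemma exists_unique_minimizer
    (E : F →L[ℝ] (Fin n → ℝ)) (D : F →L[ℝ] H)
    (C₀ : ℝ) (hC₀ : 0 < C₀) (hD : ∀ f : F, C₀ * ‖f‖ ≤ ‖D f‖)
    (X : Matrix (Fin n) (Fin q) ℝ) (hX : X.rank = q)
    (w : Fin n → ℝ) (hw : ∀ i, 0 < w i)
    (lam : ℝ) (hlam : 0 < lam) (z : Fin n → ℝ) :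
    ∃! p : (Fin q → ℝ) × F, ∀ p' : (Fin q → ℝ) × F,
      pirlsJ E D X w lam z p ≤ pirlsJ E D X w lam z p' := by
  classical
  -- spaces
  let P := WithLp 2 ((EuclideanSpace ℝ (Fin q)) × F)
  let T := WithLp 2 ((EuclideanSpace ℝ (Fin n)) × H)
  -- equivalences (all identity functions under the hood)
  let φq : (Fin q → ℝ) ≃L[ℝ] EuclideanSpace ℝ (Fin q) :=
    (PiLp.continuousLinearEquiv 2 ℝ (fun _ : Fin q => ℝ)).symm
  let φn : (Fin n → ℝ) ≃L[ℝ] EuclideanSpace ℝ (Fin n) :=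
    (PiLp.continuousLinearEquiv 2 ℝ (fun _ : Fin n => ℝ)).symm
  let πP : P ≃L[ℝ] (EuclideanSpace ℝ (Fin q)) × F :=
    WithLp.prodContinuousLinearEquiv 2 ℝ _ _
  let ρ : ((EuclideanSpace ℝ (Fin n)) × H) ≃L[ℝ] T :=
    (WithLp.prodContinuousLinearEquiv 2 ℝ _ _).symm
  -- operators
  let Xc : EuclideanSpace ℝ (Fin q) →L[ℝ] EuclideanSpace ℝ (Fin n) :=
    LinearMap.toContinuousLinearMap (Matrix.toEuclideanLin X)
  let Wc : EuclideanSpace ℝ (Fin n) →L[ℝ] EuclideanSpace ℝ (Fin n) :=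
    LinearMap.toContinuousLinearMap
      (Matrix.toEuclideanLin (Matrix.diagonal fun i => Real.sqrt (w i)))
  let Ec : F →L[ℝ] EuclideanSpace ℝ (Fin n) :=
    (φn : (Fin n → ℝ) →L[ℝ] EuclideanSpace ℝ (Fin n)).comp E
  let fstP : P →L[ℝ] EuclideanSpace ℝ (Fin q) :=
    (ContinuousLinearMap.fst ℝ (EuclideanSpace ℝ (Fin q)) F).comp
      (πP : P →L[ℝ] (EuclideanSpace ℝ (Fin q)) × F)
  let sndP : P →L[ℝ] F :=
    (ContinuousLinearMap.snd ℝ (EuclideanSpace ℝ (Fin q)) F).comp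
      (πP : P →L[ℝ] (EuclideanSpace ℝ (Fin q)) × F)
  let A1 : P →L[ℝ] EuclideanSpace ℝ (Fin n) := Wc.comp (Xc.comp fstP + Ec.comp sndP)
  let A2 : P →L[ℝ] H := Real.sqrt lam • (D.comp sndP)
  let A : P →L[ℝ] T := (ρ : _ →L[ℝ] T).comp (A1.prod A2)
  let b : T := ρ (φn (fun i => Real.sqrt (w i) * z i), 0)
  let mkE : ((Fin q → ℝ) × F) ≃ P :=
    (Equiv.prodCongr φq.toEquiv (Equiv.refl F)).trans πP.symm.toEquiv
  -- key identity
  have hA1 : ∀ p : P, A1 p = Wc (Xc (πP p).1 + Ec (πP p).2) := fun p => rfl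
  have hAfst : ∀ p : P, (A p).fst = A1 p := fun p => rfl
  have hAsnd : ∀ p : P, (A p).snd = Real.sqrt lam • D (πP p).2 := fun p => rfl
  have hbfst : ∀ i, (b.fst : EuclideanSpace ℝ (Fin n)) i = Real.sqrt (w i) * z i := fun i => rfl
  have hbsnd : b.snd = (0 : H) := rfl
  have hJ : ∀ p : (Fin q → ℝ) × F,
      pirlsJ E D X w lam z p = ‖A (mkE p) - b‖ ^ 2 := by
    intro p
    rw [WithLp.prod_norm_sq_eq_of_L2]
    have hc1 : ‖(A (mkE p) - b).fst‖ ^ 2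
        = ∑ i, w i * (z i - (X *ᵥ p.1) i - E p.2 i) ^ 2 := by
      rw [show (A (mkE p) - b).fst = (A (mkE p)).fst - b.fst from rfl]
      rw [PiLp.norm_sq_eq_of_L2]
      refine Finset.sum_congr rfl fun i _ => ?_
      have e1 : ((A (mkE p)).fst - b.fst) i
          = (Matrix.diagonal (fun k => Real.sqrt (w k)) *ᵥ
              (fun j => (X *ᵥ p.1) j + E p.2 j)) i - Real.sqrt (w i) * z i := rfl
      rw [e1, Matrix.mulVec_diagonal, Real.norm_eq_abs, sq_abs, ← mul_sub, mul_pow,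
        Real.sq_sqrt (hw i).le]
      ring
    have hc2 : ‖(A (mkE p) - b).snd‖ ^ 2 = lam * ‖D p.2‖ ^ 2 := by
      rw [show (A (mkE p) - b).snd = Real.sqrt lam • D p.2 - 0 from rfl]
      rw [sub_zero, norm_smul, Real.norm_eq_abs, abs_of_nonneg (Real.sqrt_nonneg _),
        mul_pow, Real.sq_sqrt hlam.le]
    rw [hc1, hc2, pirlsJ]
  -- antilipschitz constants
  have hXinj := rank_mulVec_injective X hX
  have hkerX : LinearMap.ker (Matrix.toEuclideanLin X) = ⊥ := by
    rw [LinearMap.ker_eq_bot]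
    intro a a' hab
    simp only [Matrix.toEuclideanLin_apply] at hab
    exact (WithLp.equiv 2 (Fin q → ℝ)).injective
      (hXinj ((WithLp.equiv 2 (Fin n → ℝ)).symm.injective hab))
  have hWinj : Function.Injective (Matrix.diagonal fun i => Real.sqrt (w i)).mulVec := by
    intro a a' hab
    funext i
    have h := congrFun hab i
    rw [Matrix.mulVec_diagonal, Matrix.mulVec_diagonal] at h
    exact mul_left_cancel₀ (Real.sqrt_pos.mpr (hw i)).ne' h
  have hkerW : LinearMap.ker (Matrix.toEuclideanLin
      (Matrix.diagonal fun i => Real.sqrt (w i))) = ⊥ := by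
    rw [LinearMap.ker_eq_bot]
    intro a a' hab
    simp only [Matrix.toEuclideanLin_apply] at hab
    exact (WithLp.equiv 2 (Fin n → ℝ)).injective
      (hWinj ((WithLp.equiv 2 (Fin n → ℝ)).symm.injective hab))
  obtain ⟨KX, hKX0, hKX⟩ := LinearMap.exists_antilipschitzWith _ hkerX
  obtain ⟨KW, hKW0, hKW⟩ := LinearMap.exists_antilipschitzWith _ hkerW
  have hXb : ∀ v : EuclideanSpace ℝ (Fin q), ‖v‖ ≤ KX * ‖Xc v‖ := by
    intro v
    have := hKX.le_mul_dist v 0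
    simp only [dist_zero_right, map_zero] at this; exact this
  have hWb : ∀ v : EuclideanSpace ℝ (Fin n), ‖v‖ ≤ KW * ‖Wc v‖ := by
    intro v
    have := hKW.le_mul_dist v 0
    simp only [dist_zero_right, map_zero] at this; exact this
  -- global bound : ‖p‖ ≤ K * ‖A p‖
  set c1 : ℝ := 1 / (Real.sqrt lam * C₀) with hc1def
  have hc1pos : 0 < c1 := by
    apply div_pos one_pos
    exact mul_pos (Real.sqrt_pos.mpr hlam) hC₀
  set c2 : ℝ := (KX : ℝ) * ((KW : ℝ) + ‖Ec‖ * c1) with hc2def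
  have hc2nn : 0 ≤ c2 := by positivity
  set K : ℝ := Real.sqrt (c1 ^ 2 + c2 ^ 2) with hKdef
  have hKnn : (0:ℝ) ≤ K := Real.sqrt_nonneg _
  have hbound : ∀ p : P, ‖p‖ ≤ K * ‖A p‖ := by
    intro p
    have hnorm : ‖A p‖ ^ 2 = ‖A1 p‖ ^ 2 + ‖A2 p‖ ^ 2 := by
      rw [WithLp.prod_norm_sq_eq_of_L2]; rfl
    have h1 : ‖A1 p‖ ≤ ‖A p‖ := by
      apply le_of_sq_le_sq' (norm_nonneg _) _ (norm_nonneg _)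
      rw [hnorm]; nlinarith [sq_nonneg ‖A2 p‖]
    have h2 : ‖A2 p‖ ≤ ‖A p‖ := by
      apply le_of_sq_le_sq' (norm_nonneg _) _ (norm_nonneg _)
      rw [hnorm]; nlinarith [sq_nonneg ‖A1 p‖]
    have hA2norm : ‖A2 p‖ = Real.sqrt lam * ‖D (πP p).2‖ := by
      rw [show A2 p = Real.sqrt lam • D (πP p).2 from rfl, norm_smul, Real.norm_eq_abs,
        abs_of_nonneg (Real.sqrt_nonneg _)]
    have hf : ‖(πP p).2‖ ≤ c1 * ‖A p‖ := by
      have hd := hD (πP p).2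
      have : Real.sqrt lam * C₀ * ‖(πP p).2‖ ≤ ‖A2 p‖ := by
        rw [hA2norm, mul_assoc]
        exact mul_le_mul_of_nonneg_left hd (Real.sqrt_nonneg _)
      rw [hc1def]
      rw [div_mul_eq_mul_div, le_div_iff₀ (mul_pos (Real.sqrt_pos.mpr hlam) hC₀)]
      calc ‖(πP p).2‖ * (Real.sqrt lam * C₀) = Real.sqrt lam * C₀ * ‖(πP p).2‖ := by ring
        _ ≤ ‖A2 p‖ := this
        _ ≤ ‖A p‖ := h2
        _ = 1 * ‖A p‖ := (one_mul _).symm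
    have hu : ‖Xc (πP p).1 + Ec (πP p).2‖ ≤ (KW : ℝ) * ‖A p‖ := by
      calc ‖Xc (πP p).1 + Ec (πP p).2‖ ≤ (KW : ℝ) * ‖Wc (Xc (πP p).1 + Ec (πP p).2)‖ := hWb _
        _ = (KW : ℝ) * ‖A1 p‖ := by rw [← hA1]
        _ ≤ (KW : ℝ) * ‖A p‖ := mul_le_mul_of_nonneg_left h1 (by positivity)
    have hEc : ‖Ec (πP p).2‖ ≤ ‖Ec‖ * ‖(πP p).2‖ := Ec.le_opNorm _
    have hXv : ‖Xc (πP p).1‖ ≤ ‖Xc (πP p).1 + Ec (πP p).2‖ + ‖Ec (πP p).2‖ := by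
      have h := norm_sub_le (Xc (πP p).1 + Ec (πP p).2) (Ec (πP p).2)
      simpa using h
    have hβ : ‖(πP p).1‖ ≤ c2 * ‖A p‖ := by
      calc ‖(πP p).1‖ ≤ (KX : ℝ) * ‖Xc (πP p).1‖ := hXb _
        _ ≤ (KX : ℝ) * (((KW : ℝ) * ‖A p‖) + ‖Ec‖ * (c1 * ‖A p‖)) := by
            apply mul_le_mul_of_nonneg_left _ (by positivity)
            calc ‖Xc (πP p).1‖ ≤ ‖Xc (πP p).1 + Ec (πP p).2‖ + ‖Ec (πP p).2‖ := hXv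
              _ ≤ (KW : ℝ) * ‖A p‖ + ‖Ec‖ * (c1 * ‖A p‖) := by
                  apply add_le_add hu
                  calc ‖Ec (πP p).2‖ ≤ ‖Ec‖ * ‖(πP p).2‖ := hEc
                    _ ≤ ‖Ec‖ * (c1 * ‖A p‖) :=
                        mul_le_mul_of_nonneg_left hf (norm_nonneg _)
        _ = c2 * ‖A p‖ := by rw [hc2def]; ring
    have hpn : ‖p‖ ^ 2 = ‖(πP p).1‖ ^ 2 + ‖(πP p).2‖ ^ 2 := by
      rw [WithLp.prod_norm_sq_eq_of_L2]; rfl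
    apply le_of_sq_le_sq' (by positivity) _ (norm_nonneg _)
    rw [hpn, mul_pow, hKdef, Real.sq_sqrt (by positivity)]
    have e1 : (0:ℝ) ≤ ‖A p‖ := norm_nonneg _
    nlinarith [hβ, hf, norm_nonneg ((πP p).1), norm_nonneg ((πP p).2), sq_nonneg ‖A p‖]
  -- A is antilipschitz, injective, closed range
  have hbound' : ∀ p : P, ‖p‖ ≤ (K.toNNReal : ℝ) * ‖A p‖ := by
    intro p
    rw [Real.coe_toNNReal _ hKnn]
    exact hbound p
  have hAanti : AntilipschitzWith K.toNNReal ⇑A :=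
    AddMonoidHomClass.antilipschitz_of_bound A hbound'
  have hAinj : Function.Injective ⇑A := hAanti.injective
  have hclosed : IsClosed (Set.range ⇑A) := hAanti.isClosed_range A.uniformContinuous
  set S : Submodule ℝ T := LinearMap.range (A : P →ₗ[ℝ] T) with hSdef
  have hScoe : (S : Set T) = Set.range ⇑A := by
    rw [hSdef]; ext x; simp [LinearMap.mem_range]
  obtain ⟨v, hvmem, hvmin⟩ := exists_norm_eq_iInf_of_complete_convex
    (K := (S : Set T)) ⟨A 0, by rw [hScoe]; exact ⟨0, rfl⟩⟩
    (by rw [hScoe]; exact hclosed.isComplete) S.convex b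
  obtain ⟨p₀, rfl⟩ : ∃ p₀ : P, A p₀ = v := by
    rw [hScoe] at hvmem; exact hvmem
  have hApmem : A p₀ ∈ S := LinearMap.mem_range.mpr ⟨p₀, rfl⟩
  have hmin0 : ∀ y : P, ‖b - A p₀‖ ≤ ‖b - A y‖ := by
    intro y
    rw [hvmin]
    exact ciInf_le ⟨0, fun x ⟨c, hc⟩ => hc ▸ norm_nonneg _⟩
      (⟨A y, LinearMap.mem_range.mpr ⟨y, rfl⟩⟩ : (S : Set T))
  -- the minimizer in the original coordinates
  refine ⟨mkE.symm p₀, ?_, ?_⟩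
  · intro p'
    rw [hJ, hJ, mkE.apply_symm_apply]
    have h := hmin0 (mkE p')
    rw [norm_sub_rev b, norm_sub_rev b] at h
    exact pow_le_pow_left₀ (norm_nonneg _) h 2
  · intro y hy
    -- y is also a minimizer; show A (mkE y) = A p₀
    have hmy : ∀ p' : (Fin q → ℝ) × F,
        pirlsJ E D X w lam z y ≤ pirlsJ E D X w lam z p' := hy
    have hJy : pirlsJ E D X w lam z y = pirlsJ E D X w lam z (mkE.symm p₀) := by
      apply le_antisymm (hmy _)
      rw [hJ, hJ, mkE.apply_symm_apply]
      have h := hmin0 (mkE y)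
      rw [norm_sub_rev b, norm_sub_rev b] at h
      exact pow_le_pow_left₀ (norm_nonneg _) h 2
    have hnorm_eq : ‖b - A (mkE y)‖ = ‖b - A p₀‖ := by
      have h1 : ‖A (mkE y) - b‖ ^ 2 = ‖A p₀ - b‖ ^ 2 := by
        have := hJy
        rw [hJ, hJ, mkE.apply_symm_apply] at this
        exact this
      rw [norm_sub_rev b, norm_sub_rev b]
      exact le_antisymm
        (le_of_sq_le_sq' (norm_nonneg _) (le_of_eq h1) (norm_nonneg _))
        (le_of_sq_le_sq' (norm_nonneg _) (le_of_eq h1.symm) (norm_nonneg _))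
    have hvmin_y : ‖b - A (mkE y)‖ = ⨅ w : (S : Set T), ‖b - w‖ := by
      rw [hnorm_eq]; exact hvmin
    have horth0 : ∀ u ∈ S, inner ℝ (b - A p₀) u = (0:ℝ) :=
      (Submodule.norm_eq_iInf_iff_real_inner_eq_zero S hApmem).mp hvmin
    have horth1 : ∀ u ∈ S, inner ℝ (b - A (mkE y)) u = (0:ℝ) :=
      (Submodule.norm_eq_iInf_iff_real_inner_eq_zero S (LinearMap.mem_range.mpr ⟨mkE y, rfl⟩)).mp hvmin_y
    have hdiffmem : A (mkE y) - A p₀ ∈ S :=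
      S.sub_mem (LinearMap.mem_range.mpr ⟨mkE y, rfl⟩) hApmem
    have hzero : A (mkE y) - A p₀ = 0 := by
      have e0 := horth0 _ hdiffmem
      have e1 := horth1 _ hdiffmem
      have e2 : (A (mkE y) - A p₀ : T) = (b - A p₀) - (b - A (mkE y)) := by abel
      have hinner : inner ℝ (A (mkE y) - A p₀) (A (mkE y) - A p₀) = (0:ℝ) := by
        calc (inner ℝ (A (mkE y) - A p₀) (A (mkE y) - A p₀) : ℝ)
            = inner ℝ ((b - A p₀) - (b - A (mkE y))) (A (mkE y) - A p₀) := by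
              exact congrArg (fun t : T => (inner ℝ t (A (mkE y) - A p₀) : ℝ)) e2
          _ = inner ℝ (b - A p₀) (A (mkE y) - A p₀)
              - inner ℝ (b - A (mkE y)) (A (mkE y) - A p₀) := inner_sub_left _ _ _
          _ = 0 := by rw [e0, e1, sub_zero]
      exact inner_self_eq_zero.mp hinner
    have hAeq : A (mkE y) = A p₀ := by
      rwa [sub_eq_zero] at hzero
    have := hAinj hAeq
    rw [← this, Equiv.symm_apply_apply]

end main

lemma beta_formula {n q : ℕ} {F H : Type*}
    [NormedAddCommGroup F] [InnerProductSpace ℝ F]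
    [NormedAddCommGroup H] [InnerProductSpace ℝ H]
    (E : F →L[ℝ] (Fin n → ℝ)) (D : F →L[ℝ] H)
    (X : Matrix (Fin n) (Fin q) ℝ) (hX : X.rank = q)
    (w : Fin n → ℝ) (hw : ∀ i, 0 < w i)
    (lam : ℝ) (z : Fin n → ℝ) (p : (Fin q → ℝ) × F)
    (hmin : ∀ p' : (Fin q → ℝ) × F,
      pirlsJ E D X w lam z p ≤ pirlsJ E D X w lam z p') :
    p.1 = ((Xᵀ * diagonal w * X)⁻¹ * Xᵀ * diagonal w) *ᵥ (z - E p.2) := by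
  obtain ⟨β, f⟩ := p
  simp only
  have key : ∀ v : Fin q → ℝ,
      ∑ i, w i * (z i - (X *ᵥ β) i - E f i) * (X *ᵥ v) i = 0 := by
    intro v
    have hq : ∀ t : ℝ, 0 ≤ (∑ i, w i * (X *ᵥ v) i ^ 2) * t ^ 2
        + (∑ i, (-2) * (w i * (z i - (X *ᵥ β) i - E f i) * (X *ᵥ v) i)) * t := by
      intro t
      have h := hmin (β + t • v, f)
      simp only [pirlsJ] at h
      have expand : ∑ i, w i * (z i - (X *ᵥ (β + t • v)) i - E f i) ^ 2
          = ∑ i, w i * (z i - (X *ᵥ β) i - E f i) ^ 2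
            + ((∑ i, w i * (X *ᵥ v) i ^ 2) * t ^ 2
              + (∑ i, (-2) * (w i * (z i - (X *ᵥ β) i - E f i) * (X *ᵥ v) i)) * t) := by
        rw [Finset.sum_mul, Finset.sum_mul, ← Finset.sum_add_distrib, ← Finset.sum_add_distrib]
        refine Finset.sum_congr rfl fun i _ => ?_
        have hx : (X *ᵥ (β + t • v)) i = (X *ᵥ β) i + t * (X *ᵥ v) i := by
          simp [Matrix.mulVec_add, Matrix.mulVec_smul]
        rw [hx]
        ring
      rw [expand] at h
      linarith
    have hb := quad_aux _ _ hq
    have : (-2 : ℝ) * ∑ i, w i * (z i - (X *ᵥ β) i - E f i) * (X *ᵥ v) i = 0 := by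
      rw [Finset.mul_sum]
      simpa using hb
    linarith
  have hj : ∀ j, ∑ i, w i * (z i - (X *ᵥ β) i - E f i) * X i j = 0 := by
    intro j
    have := key (Pi.single j 1)
    simpa [Matrix.mulVec_single] using this
  have hMβ : (Xᵀ * diagonal w * X) *ᵥ β = (Xᵀ * diagonal w) *ᵥ (z - E f) := by
    funext j
    have e1 : ((Xᵀ * diagonal w * X) *ᵥ β) j = ∑ i, X i j * w i * (X *ᵥ β) i := by
      rw [← Matrix.mulVec_mulVec]
      simp [Matrix.mulVec, dotProduct, Matrix.mul_diagonal, Matrix.transpose_apply]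
    have e2 : ((Xᵀ * diagonal w) *ᵥ (z - E f)) j = ∑ i, X i j * w i * (z i - E f i) := by
      simp [Matrix.mulVec, dotProduct, Matrix.mul_diagonal, Matrix.transpose_apply]
    rw [e1, e2, ← sub_eq_zero, ← Finset.sum_sub_distrib]
    have hneg : ∑ i, (X i j * w i * (X *ᵥ β) i - X i j * w i * (z i - E f i))
        = -∑ i, w i * (z i - (X *ᵥ β) i - E f i) * X i j := by
      rw [← Finset.sum_neg_distrib]
      exact Finset.sum_congr rfl fun i _ => by ring
    rw [hneg, hj j, neg_zero]
  have hdet : IsUnit (Xᵀ * diagonal w * X).det := by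
    have := (xtwx_posdef X (rank_mulVec_injective X hX) w hw).det_pos
    exact isUnit_iff_ne_zero.mpr (ne_of_gt this)
  calc β = 1 *ᵥ β := (Matrix.one_mulVec β).symm
    _ = ((Xᵀ * diagonal w * X)⁻¹ * (Xᵀ * diagonal w * X)) *ᵥ β := by
        rw [Matrix.nonsing_inv_mul _ hdet]
    _ = (Xᵀ * diagonal w * X)⁻¹ *ᵥ ((Xᵀ * diagonal w * X) *ᵥ β) := by
        rw [Matrix.mulVec_mulVec]
    _ = (Xᵀ * diagonal w * X)⁻¹ *ᵥ ((Xᵀ * diagonal w) *ᵥ (z - E f)) := by rw [hMβ]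
    _ = ((Xᵀ * diagonal w * X)⁻¹ * (Xᵀ * diagonal w)) *ᵥ (z - E f) := by
        rw [Matrix.mulVec_mulVec]
    _ = ((Xᵀ * diagonal w * X)⁻¹ * Xᵀ * diagonal w) *ᵥ (z - E f) := by
        rw [Matrix.mul_assoc ((Xᵀ * diagonal w * X)⁻¹) Xᵀ (diagonal w)]

theorem stmt_0 {n q : ℕ} {F H : Type*}
    [NormedAddCommGroup F] [InnerProductSpace ℝ F] [CompleteSpace F]
    [NormedAddCommGroup H] [InnerProductSpace ℝ H] [CompleteSpace H]
    (E : F →L[ℝ] (Fin n → ℝ)) (D : F →L[ℝ] H)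
    (C₀ : ℝ) (hC₀ : 0 < C₀) (hD : ∀ f : F, C₀ * ‖f‖ ≤ ‖D f‖)
    (X : Matrix (Fin n) (Fin q) ℝ) (hX : X.rank = q)
    (w : Fin n → ℝ) (hw : ∀ i, 0 < w i)
    (lam : ℝ) (hlam : 0 < lam) (z : Fin n → ℝ) :
    (∃! p : (Fin q → ℝ) × F,
      ∀ p' : (Fin q → ℝ) × F,
        pirlsJ E D X w lam z p ≤ pirlsJ E D X w lam z p') ∧
    (∀ p : (Fin q → ℝ) × F,
      (∀ p' : (Fin q → ℝ) × F,
        pirlsJ E D X w lam z p ≤ pirlsJ E D X w lam z p') →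
      p.1 = ((Xᵀ * diagonal w * X)⁻¹ * Xᵀ * diagonal w) *ᵥ (z - E p.2)) := by
  exact ⟨exists_unique_minimizer E D C₀ hC₀ hD X hX w hw lam hlam z,
    fun p hp => beta_formula E D X hX w hw lam z p hp⟩
end

section
/- Let F and H be real Hilbert spaces, let E : F → ℝⁿ and D : F → H be continuous linear maps with ‖D f‖_H ≥ C₀ ‖f‖_F for all f ∈ F, for some C₀ > 0. Let X be a real n×q matrix of rank q, set Q = Iₙ − X(XᵀX)⁻¹Xᵀ, let λ > 0 and z ∈ ℝⁿ. Then there exists a unique f̃ ∈ F such that for all u ∈ F: (E u)ᵀ Q (E f̃) + λ ⟨D u, D f̃⟩_H = (E u)ᵀ Q z; moreover this f̃ is the unique minimizer over F of the functional f ↦ (z − E f)ᵀ Q (z − E f) + λ ‖D f‖²_H. -/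
open Matrix

theorem stmt_1 {n q : ℕ} {F H : Type*}
    [NormedAddCommGroup F] [InnerProductSpace ℝ F] [CompleteSpace F]
    [NormedAddCommGroup H] [InnerProductSpace ℝ H] [CompleteSpace H]
    (E : F →L[ℝ] (Fin n → ℝ)) (D : F →L[ℝ] H)
    (C₀ : ℝ) (hC₀ : 0 < C₀) (hD : ∀ f : F, C₀ * ‖f‖ ≤ ‖D f‖)
    (X : Matrix (Fin n) (Fin q) ℝ) (hX : X.rank = q)
    (Q : Matrix (Fin n) (Fin n) ℝ) (hQ : Q = 1 - X * (Xᵀ * X)⁻¹ * Xᵀ)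
    (lam : ℝ) (hlam : 0 < lam) (z : Fin n → ℝ) :
    (∃! ftil : F, ∀ u : F,
        E u ⬝ᵥ (Q *ᵥ E ftil) + lam * (inner ℝ (D u) (D ftil) : ℝ)
          = E u ⬝ᵥ (Q *ᵥ z)) ∧
    (∀ ftil : F,
      (∀ u : F,
        E u ⬝ᵥ (Q *ᵥ E ftil) + lam * (inner ℝ (D u) (D ftil) : ℝ)
          = E u ⬝ᵥ (Q *ᵥ z)) →
      ((∀ f : F,
          (z - E ftil) ⬝ᵥ (Q *ᵥ (z - E ftil)) + lam * ‖D ftil‖ ^ 2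
            ≤ (z - E f) ⬝ᵥ (Q *ᵥ (z - E f)) + lam * ‖D f‖ ^ 2) ∧
        (∀ f : F,
          (∀ g : F,
            (z - E f) ⬝ᵥ (Q *ᵥ (z - E f)) + lam * ‖D f‖ ^ 2
              ≤ (z - E g) ⬝ᵥ (Q *ᵥ (z - E g)) + lam * ‖D g‖ ^ 2) →
          f = ftil))) := by
  classical
  -- Step 1: XᵀX is invertible
  have hdet : IsUnit (Xᵀ * X).det := by
    have hrank : (Xᵀ * X).rank = q := by rw [Matrix.rank_transpose_mul_self, hX]
    have htop : LinearMap.range (Xᵀ * X).mulVecLin = ⊤ := by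
      apply Submodule.eq_top_of_finrank_eq
      simpa [Matrix.rank] using hrank
    have hsurj : Function.Surjective ((Xᵀ * X).mulVec) := by
      have h2 := LinearMap.range_eq_top.mp htop
      simpa only [Matrix.coe_mulVecLin] using h2
    rw [← Matrix.isUnit_iff_isUnit_det]
    exact Matrix.mulVec_surjective_iff_isUnit.mp hsurj
  -- Step 2: Q is symmetric and idempotent
  have hQsymm : Qᵀ = Q := by
    rw [hQ]
    simp [Matrix.transpose_sub, Matrix.transpose_mul, Matrix.transpose_nonsing_inv,
      Matrix.mul_assoc]
  have hQQ : Q * Q = Q := by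
    have h2 : (Xᵀ * X)⁻¹ * (Xᵀ * X) = 1 := Matrix.nonsing_inv_mul _ hdet
    have hP : X * (Xᵀ * X)⁻¹ * Xᵀ * (X * (Xᵀ * X)⁻¹ * Xᵀ) = X * (Xᵀ * X)⁻¹ * Xᵀ := by
      calc X * (Xᵀ * X)⁻¹ * Xᵀ * (X * (Xᵀ * X)⁻¹ * Xᵀ)
          = X * (((Xᵀ * X)⁻¹ * (Xᵀ * X)) * ((Xᵀ * X)⁻¹ * Xᵀ)) := by
            simp only [Matrix.mul_assoc]
        _ = X * (Xᵀ * X)⁻¹ * Xᵀ := by rw [h2, Matrix.one_mul, ← Matrix.mul_assoc]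
    rw [hQ]
    simp only [Matrix.sub_mul, Matrix.mul_sub, Matrix.one_mul, Matrix.mul_one, hP]
    abel
  -- symmetry and positivity of the Q quadratic form
  have hsym : ∀ a b : Fin n → ℝ, a ⬝ᵥ (Q *ᵥ b) = b ⬝ᵥ (Q *ᵥ a) := by
    intro a b
    rw [Matrix.dotProduct_mulVec, ← Matrix.mulVec_transpose, hQsymm, dotProduct_comm]
  have hpsd : ∀ a : Fin n → ℝ, 0 ≤ a ⬝ᵥ (Q *ᵥ a) := by
    intro a
    have h1 : a ⬝ᵥ (Q *ᵥ a) = (Q *ᵥ a) ⬝ᵥ (Q *ᵥ a) := by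
      conv_lhs => rw [← hQQ, ← Matrix.mulVec_mulVec]
      rw [Matrix.dotProduct_mulVec, ← Matrix.mulVec_transpose, hQsymm]
    rw [h1]
    exact Finset.sum_nonneg fun i _ => mul_self_nonneg _
  -- Step 3: the operator T and the bilinear form B
  let e : EuclideanSpace ℝ (Fin n) ≃L[ℝ] (Fin n → ℝ) := EuclideanSpace.equiv (Fin n) ℝ
  let E' : F →L[ℝ] EuclideanSpace ℝ (Fin n) :=
    (e.symm.toContinuousLinearMap).comp E
  let Qc : EuclideanSpace ℝ (Fin n) →L[ℝ] EuclideanSpace ℝ (Fin n) :=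
    LinearMap.toContinuousLinearMap (Matrix.toEuclideanLin Q)
  let T : F →L[ℝ] F :=
    (ContinuousLinearMap.adjoint E').comp (Qc.comp E')
      + lam • ((ContinuousLinearMap.adjoint D).comp D)
  have hT : ∀ u v : F, (inner ℝ (T u) v : ℝ)
      = E u ⬝ᵥ (Q *ᵥ E v) + lam * (inner ℝ (D u) (D v) : ℝ) := by
    intro u v
    have h1 : (inner ℝ (T u) v : ℝ)
        = inner ℝ (Qc (E' u)) (E' v) + lam * inner ℝ (D u) (D v) := by
      simp only [T, ContinuousLinearMap.add_apply, ContinuousLinearMap.coe_smul',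
        Pi.smul_apply, ContinuousLinearMap.comp_apply, inner_add_left,
        real_inner_smul_left, ContinuousLinearMap.adjoint_inner_left]
    rw [h1]
    congr 1
    have h2 : (inner ℝ (Qc (E' u)) (E' v) : ℝ) = (Q *ᵥ E u) ⬝ᵥ E v := by
      simp [Qc, E', e, PiLp.inner_apply, Matrix.toEuclideanLin_apply, dotProduct, mul_comm]
    rw [h2, dotProduct_comm, hsym]
  let B : F →L[ℝ] F →L[ℝ] ℝ :=
    LinearMap.mkContinuous₂
      (LinearMap.mk₂ ℝ (fun u v => (inner ℝ (T u) v : ℝ))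
        (fun m₁ m₂ v => by simp [inner_add_left])
        (fun c m v => by simp [real_inner_smul_left])
        (fun m v₁ v₂ => by simp [inner_add_right])
        (fun c m v => by simp [real_inner_smul_right]))
      ‖T‖
      (fun u v => by
        simp only [LinearMap.mk₂_apply]
        calc ‖(inner ℝ (T u) v : ℝ)‖ ≤ ‖T u‖ * ‖v‖ := norm_inner_le_norm _ _
          _ ≤ ‖T‖ * ‖u‖ * ‖v‖ :=
            mul_le_mul_of_nonneg_right (T.le_opNorm u) (norm_nonneg v))
  have hB : ∀ u v : F, B u v
      = E u ⬝ᵥ (Q *ᵥ E v) + lam * (inner ℝ (D u) (D v) : ℝ) := fun u v => hT u v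
  have hBsymm : ∀ u v : F, B u v = B v u := by
    intro u v
    rw [hB, hB, hsym (E u) (E v), real_inner_comm]
  -- coercivity
  have hcoer : IsCoercive B := by
    refine ⟨lam * C₀ ^ 2, by positivity, fun u => ?_⟩
    rw [hB]
    have h1 := hpsd (E u)
    have h2 := hD u
    have h3 : (inner ℝ (D u) (D u) : ℝ) = ‖D u‖ ^ 2 := real_inner_self_eq_norm_sq _
    have h5 : (C₀ * ‖u‖) * (C₀ * ‖u‖) ≤ ‖D u‖ * ‖D u‖ :=
      mul_self_le_mul_self (by positivity) h2
    have h6 : lam * ((C₀ * ‖u‖) * (C₀ * ‖u‖)) ≤ lam * (‖D u‖ * ‖D u‖) :=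
      mul_le_mul_of_nonneg_left h5 hlam.le
    rw [h3]
    nlinarith [h6, h1]
  obtain ⟨C, hC, hc⟩ := id hcoer
  have hzero : ∀ a b : F, (B (a - b)) (a - b) ≤ 0 → a = b := by
    intro a b hle
    have h3 := hc (a - b)
    have hsq : ‖a - b‖ * ‖a - b‖ ≤ 0 := by nlinarith
    have h4 : ‖a - b‖ = 0 :=
      mul_self_eq_zero.mp (le_antisymm hsq (mul_self_nonneg _))
    exact sub_eq_zero.mp (norm_eq_zero.mp h4)
  -- the Riesz representative of the right-hand side
  let w₀ : F := (ContinuousLinearMap.adjoint E') (e.symm (Q *ᵥ z))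
  have hw₀ : ∀ u : F, (inner ℝ w₀ u : ℝ) = E u ⬝ᵥ (Q *ᵥ z) := by
    intro u
    have h1 : (inner ℝ w₀ u : ℝ) = inner ℝ (e.symm (Q *ᵥ z)) (E' u) :=
      ContinuousLinearMap.adjoint_inner_left _ _ _
    rw [h1]
    have h2 : (inner ℝ (e.symm (Q *ᵥ z)) (E' u) : ℝ) = (Q *ᵥ z) ⬝ᵥ E u := by
      simp [E', e, PiLp.inner_apply, dotProduct, mul_comm]
    rw [h2, dotProduct_comm]
  -- the weak solution
  set ftil : F := hcoer.continuousLinearEquivOfBilin.symm w₀ with hftil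
  have hft : ∀ u : F, B ftil u = inner ℝ w₀ u := by
    intro u
    have h1 := hcoer.continuousLinearEquivOfBilin_apply ftil u
    rw [hftil, ContinuousLinearEquiv.apply_symm_apply] at h1
    exact h1.symm
  have hPftil : ∀ u : F,
      E u ⬝ᵥ (Q *ᵥ E ftil) + lam * (inner ℝ (D u) (D ftil) : ℝ) = E u ⬝ᵥ (Q *ᵥ z) := by
    intro u
    rw [← hB, hBsymm, hft, hw₀]
  -- uniqueness of weak solutions
  have huniq : ∀ f1 f2 : F,
      (∀ u : F, E u ⬝ᵥ (Q *ᵥ E f1) + lam * (inner ℝ (D u) (D f1) : ℝ) = E u ⬝ᵥ (Q *ᵥ z)) →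
      (∀ u : F, E u ⬝ᵥ (Q *ᵥ E f2) + lam * (inner ℝ (D u) (D f2) : ℝ) = E u ⬝ᵥ (Q *ᵥ z)) →
      f1 = f2 := by
    intro f1 f2 h1 h2
    have hd : ∀ u : F, B u (f1 - f2) = 0 := by
      intro u
      have : B u f1 = B u f2 := by rw [hB, hB, h1 u, h2 u]
      rw [map_sub, this, sub_self]
    exact hzero f1 f2 (le_of_eq (hd (f1 - f2)))
  -- the objective functional identity
  have hJ : ∀ f : F, (z - E f) ⬝ᵥ (Q *ᵥ (z - E f)) + lam * ‖D f‖ ^ 2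
      = z ⬝ᵥ (Q *ᵥ z) - 2 * (E f ⬝ᵥ (Q *ᵥ z)) + B f f := by
    intro f
    rw [hB f f]
    have h3 : (inner ℝ (D f) (D f) : ℝ) = ‖D f‖ ^ 2 := real_inner_self_eq_norm_sq _
    have expand : (z - E f) ⬝ᵥ (Q *ᵥ (z - E f))
        = (z ⬝ᵥ (Q *ᵥ z) - z ⬝ᵥ (Q *ᵥ E f)) - (E f ⬝ᵥ (Q *ᵥ z) - E f ⬝ᵥ (Q *ᵥ E f)) := by
      simp only [Matrix.mulVec_sub, sub_dotProduct, dotProduct_sub]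
      linarith [hsym z (E f)]
    have hzf : z ⬝ᵥ (Q *ᵥ E f) = E f ⬝ᵥ (Q *ᵥ z) := hsym _ _
    rw [expand, hzf, ← h3]
    ring
  refine ⟨⟨ftil, hPftil, fun f hf => huniq f ftil hf hPftil⟩, ?_⟩
  intro g hg
  -- g is a weak solution, hence g = ftil in spirit; work with g directly
  have hgB : ∀ u : F, B u g = E u ⬝ᵥ (Q *ᵥ z) := by
    intro u; rw [hB]; exact hg u
  have hkey : ∀ f : F,
      ((z - E f) ⬝ᵥ (Q *ᵥ (z - E f)) + lam * ‖D f‖ ^ 2)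
        - ((z - E g) ⬝ᵥ (Q *ᵥ (z - E g)) + lam * ‖D g‖ ^ 2)
      = B (f - g) (f - g) := by
    intro f
    have h1 := hJ f
    have h2 := hJ g
    have h3 : B (f - g) (f - g) = B f f - B f g - (B g f - B g g) := by
      simp only [map_sub, ContinuousLinearMap.sub_apply]
      ring
    have h4 : B g f = B f g := hBsymm g f
    have h5 : B f g = E f ⬝ᵥ (Q *ᵥ z) := hgB f
    have h6 : B g g = E g ⬝ᵥ (Q *ᵥ z) := hgB g
    rw [h1, h2, h3, h4, h5, h6]
    ring
  constructor
  · intro f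
    have h1 := hkey f
    have h2 := hc (f - g)
    have h0 : (0 : ℝ) ≤ B (f - g) (f - g) := le_trans (by positivity) h2
    linarith
  · intro f hf
    have h1 := hf g
    have h2 := hkey f
    exact hzero f g (by linarith)
end

section
/- Let F be a real normed vector space, L₁, …, Lₙ : F → ℝ continuous linear functionals, X a real n×q matrix with rows x₁ᵀ, …, xₙᵀ, b : ℝ → ℝ differentiable with derivative b', y ∈ ℝⁿ, φ > 0, λ ≥ 0, and m : F × F → ℝ a continuous bilinear symmetric form. Define L_p(β, f) = (1/φ) Σᵢ (yᵢ θᵢ(β, f) − b(θᵢ(β, f))) − (λ/2) m(f, f), with θᵢ(β, f) = xᵢᵀβ + Lᵢ f. If (β̂, f̂) ∈ ℝ^q × F maximizes L_p, then: (i) Σᵢ (yᵢ − b'(θᵢ(β̂, f̂))) x_{ik} = 0 for every k = 1, …, q; and (ii) (1/φ) Σᵢ (yᵢ − b'(θᵢ(β̂, f̂))) Lᵢ u = λ m(u, f̂) for every u ∈ F. -/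
open Matrix

theorem stmt_14 {n q : ℕ} {F : Type*} [NormedAddCommGroup F] [NormedSpace ℝ F]
    (L : Fin n → (F →L[ℝ] ℝ))
    (X : Matrix (Fin n) (Fin q) ℝ)
    (b b' : ℝ → ℝ) (hb : ∀ x : ℝ, HasDerivAt b (b' x) x)
    (y : Fin n → ℝ) (φ : ℝ) (hφ : 0 < φ) (lam : ℝ) (hlam : 0 ≤ lam)
    (m : F →ₗ[ℝ] F →ₗ[ℝ] ℝ)
    (hmcont : ∃ M : ℝ, ∀ u v : F, |m u v| ≤ M * ‖u‖ * ‖v‖)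
    (hmsymm : ∀ u v : F, m u v = m v u)
    (βhat : Fin q → ℝ) (fhat : F)
    (hmax : ∀ p : (Fin q → ℝ) × F,
      (1 / φ) * ∑ i, (y i * ((X *ᵥ p.1) i + L i p.2) - b ((X *ᵥ p.1) i + L i p.2))
          - (lam / 2) * m p.2 p.2
        ≤ (1 / φ) * ∑ i, (y i * ((X *ᵥ βhat) i + L i fhat) - b ((X *ᵥ βhat) i + L i fhat))
          - (lam / 2) * m fhat fhat) :
    (∀ k : Fin q, ∑ i, (y i - b' ((X *ᵥ βhat) i + L i fhat)) * X i k = 0) ∧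
    (∀ u : F,
      (1 / φ) * ∑ i, (y i - b' ((X *ᵥ βhat) i + L i fhat)) * L i u
        = lam * m u fhat) := by
  -- key lemma: vanishing directional derivative
  have key : ∀ (c a : Fin n → ℝ) (A B : ℝ),
      (∀ t : ℝ, (1/φ) * ∑ i, (y i * (c i + t * a i) - b (c i + t * a i))
          - (lam/2) * (m fhat fhat + t * B + t^2 * A)
        ≤ (1/φ) * ∑ i, (y i * c i - b (c i)) - (lam/2) * m fhat fhat) →
      (1/φ) * ∑ i, (y i - b' (c i)) * a i - (lam/2) * B = 0 := by
    intro c a A B hle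
    set g : ℝ → ℝ := fun t => (1/φ) * ∑ i, (y i * (c i + t * a i) - b (c i + t * a i))
        - (lam/2) * (m fhat fhat + t * B + t^2 * A) with hg
    have hderiv : HasDerivAt g ((1/φ) * ∑ i, (y i - b' (c i)) * a i - (lam/2) * B) 0 := by
      have h1 : ∀ i, HasDerivAt (fun t : ℝ => y i * (c i + t * a i) - b (c i + t * a i))
          ((y i - b' (c i)) * a i) 0 := by
        intro i
        have hinner : HasDerivAt (fun t : ℝ => c i + t * a i) (a i) 0 := by
          simpa using ((hasDerivAt_id (0:ℝ)).mul_const (a i)).const_add (c i)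
        have h2 : HasDerivAt (fun t : ℝ => y i * (c i + t * a i)) (y i * a i) 0 :=
          hinner.const_mul (y i)
        have h3 : HasDerivAt (fun t : ℝ => b (c i + t * a i)) (b' (c i) * a i) 0 := by
          have := (hb (c i + 0 * a i)).comp 0 hinner
          simp only [zero_mul, add_zero] at this
          exact this
        exact (h2.sub h3).congr_deriv (by ring)
      have hsum : HasDerivAt (fun t : ℝ => ∑ i, (y i * (c i + t * a i) - b (c i + t * a i)))
          (∑ i, (y i - b' (c i)) * a i) 0 := HasDerivAt.fun_sum (fun i _ => h1 i)
      have hpen : HasDerivAt (fun t : ℝ => (lam/2) * (m fhat fhat + t * B + t^2 * A))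
          ((lam/2) * B) 0 := by
        have hlin : HasDerivAt (fun t : ℝ => t * B) B 0 := by
          simpa using (hasDerivAt_id (0:ℝ)).mul_const B
        have hquad : HasDerivAt (fun t : ℝ => t^2 * A) 0 0 := by
          simpa using (hasDerivAt_pow 2 (0:ℝ)).mul_const A
        have := ((hlin.const_add (m fhat fhat)).add hquad).const_mul (lam/2)
        simpa using this
      exact (hsum.const_mul (1/φ)).sub hpen
    have hg0 : g 0 = (1/φ) * ∑ i, (y i * c i - b (c i)) - (lam/2) * m fhat fhat := by
      simp [hg]
    have hmax0 : IsLocalMax g 0 := Filter.Eventually.of_forall (fun t => by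
      rw [hg0]; exact hle t)
    exact hmax0.hasDerivAt_eq_zero hderiv
  have hφ' : (1/φ : ℝ) ≠ 0 := by positivity
  constructor
  · intro k
    have hle : ∀ t : ℝ, (1/φ) * ∑ i, (y i * (((X *ᵥ βhat) i + L i fhat) + t * X i k)
            - b (((X *ᵥ βhat) i + L i fhat) + t * X i k))
          - (lam/2) * (m fhat fhat + t * 0 + t^2 * 0)
        ≤ (1/φ) * ∑ i, (y i * ((X *ᵥ βhat) i + L i fhat) - b ((X *ᵥ βhat) i + L i fhat))
          - (lam/2) * m fhat fhat := by
      intro t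
      have e : ∀ i, (X *ᵥ (βhat + t • (Pi.single k 1 : Fin q → ℝ))) i + L i fhat
          = ((X *ᵥ βhat) i + L i fhat) + t * X i k := by
        intro i
        rw [mulVec_add, mulVec_smul, mulVec_single]
        simp only [Pi.add_apply, Pi.smul_apply, smul_eq_mul, mul_one, MulOpposite.op_one, one_smul, Matrix.col_apply]
        ring
      have h := hmax (βhat + t • (Pi.single k 1 : Fin q → ℝ), fhat)
      simp only [e] at h
      have e2 : m fhat fhat + t * 0 + t^2 * 0 = m fhat fhat := by ring
      rw [e2]
      exact h
    have h0 := key (fun i => (X *ᵥ βhat) i + L i fhat) (fun i => X i k) 0 0 hle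
    have h1 : (1/φ) * ∑ i, (y i - b' ((X *ᵥ βhat) i + L i fhat)) * X i k = 0 := by
      simpa using h0
    exact (mul_eq_zero.mp h1).resolve_left hφ'
  · intro u
    have hle : ∀ t : ℝ, (1/φ) * ∑ i, (y i * (((X *ᵥ βhat) i + L i fhat) + t * L i u)
            - b (((X *ᵥ βhat) i + L i fhat) + t * L i u))
          - (lam/2) * (m fhat fhat + t * (2 * m u fhat) + t^2 * m u u)
        ≤ (1/φ) * ∑ i, (y i * ((X *ᵥ βhat) i + L i fhat) - b ((X *ᵥ βhat) i + L i fhat))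
          - (lam/2) * m fhat fhat := by
      intro t
      have e : ∀ i, (X *ᵥ βhat) i + L i (fhat + t • u)
          = ((X *ᵥ βhat) i + L i fhat) + t * L i u := by
        intro i
        simp only [map_add, ContinuousLinearMap.map_smul, smul_eq_mul]
        ring
      have hm2 : m (fhat + t • u) (fhat + t • u)
          = m fhat fhat + t * (2 * m u fhat) + t^2 * m u u := by
        simp only [map_add, LinearMap.add_apply, LinearMap.map_smul, LinearMap.smul_apply,
          smul_eq_mul]
        rw [hmsymm fhat u]
        ring
      have h := hmax (βhat, fhat + t • u)
      simp only [e, hm2] at h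
      exact h
    have h0 := key (fun i => (X *ᵥ βhat) i + L i fhat) (fun i => L i u) (m u u)
      (2 * m u fhat) hle
    have h1 : (1/φ) * ∑ i, (y i - b' ((X *ᵥ βhat) i + L i fhat)) * L i u
        - (lam/2) * (2 * m u fhat) = 0 := by simpa using h0
    have : (lam/2) * (2 * m u fhat) = lam * m u fhat := by ring
    linarith [this ▸ h1]
end
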